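/- Let G be a group acting on a set S and on a set A, and acting on a real normed vector space Z by continuous linear equivalences ρ_Z : G → (Z ≃L Z) (not necessarily norm-preserving). Let F : S × A → Z and h : S → Z, let (s, a, s') ∈ S × A × S, and let ε₁, ε₂, ε₃ ≥ 0. Assume ‖F(s,a) − h(s')‖ ≤ ε₁, and for every g ∈ G: ‖F(g•s, g•a) − ρ_Z(g)(F(s,a))‖ ≤ ε₂ and ‖h(g•s') − ρ_Z(g)(h(s'))‖ ≤ ε₃. Then for every g ∈ G, ‖F(g•s, g•a) − h(g•s')‖ ≤ ε₁·‖ρ_Z(g)‖ + ε₂ + ε₃, where ‖ρ_Z(g)‖ denotes the operator norm of the continuous linear map ρ_Z(g). -/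
import Mathlib


/-- Variant of Proposition 1 for a non-`G`-invariant norm: the bound picks up
the operator norm of `ρZ g`. -/
theorem pointwise_generalization_bound_operator_norm
    {G S A Z : Type*} [Group G] [MulAction G S] [MulAction G A]
    [NormedAddCommGroup Z] [NormedSpace ℝ Z]
    (ρZ : G → (Z ≃L[ℝ] Z))
    (F : S × A → Z) (h : S → Z)
    (s : S) (a : A) (s' : S)
    (ε₁ ε₂ ε₃ : ℝ) (hε₁ : 0 ≤ ε₁) (hε₂ : 0 ≤ ε₂) (hε₃ : 0 ≤ ε₃)
    (hmodel : ‖F (s, a) - h s'‖ ≤ ε₁)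
    (heqF : ∀ g : G, ‖F (g • s, g • a) - ρZ g (F (s, a))‖ ≤ ε₂)
    (heqh : ∀ g : G, ‖h (g • s') - ρZ g (h s')‖ ≤ ε₃) :
    ∀ g : G, ‖F (g • s, g • a) - h (g • s')‖ ≤
      ε₁ * ‖(ρZ g : Z →L[ℝ] Z)‖ + ε₂ + ε₃ := by
  intro g
  have h1 : ‖ρZ g (F (s, a)) - ρZ g (h s')‖ ≤ ε₁ * ‖(ρZ g : Z →L[ℝ] Z)‖ := by
    rw [← map_sub]
    calc ‖ρZ g (F (s, a) - h s')‖ ≤ ‖(ρZ g : Z →L[ℝ] Z)‖ * ‖F (s, a) - h s'‖ :=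
          (ρZ g : Z →L[ℝ] Z).le_opNorm _
      _ ≤ ‖(ρZ g : Z →L[ℝ] Z)‖ * ε₁ := by
          exact mul_le_mul_of_nonneg_left hmodel (norm_nonneg _)
      _ = ε₁ * ‖(ρZ g : Z →L[ℝ] Z)‖ := mul_comm _ _
  calc ‖F (g • s, g • a) - h (g • s')‖
      ≤ ‖F (g • s, g • a) - ρZ g (F (s, a))‖ + ‖ρZ g (F (s, a)) - ρZ g (h s')‖
        + ‖ρZ g (h s') - h (g • s')‖ := by
          have := norm_sub_le_norm_sub_add_norm_sub (F (g • s, g • a)) (ρZ g (F (s, a))) (h (g • s'))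
          have h2 := norm_sub_le_norm_sub_add_norm_sub (ρZ g (F (s, a))) (ρZ g (h s')) (h (g • s'))
          linarith
    _ ≤ ε₂ + ε₁ * ‖(ρZ g : Z →L[ℝ] Z)‖ + ε₃ := by
        have := heqh g
        rw [norm_sub_rev] at this
        exact add_le_add (add_le_add (heqF g) h1) this
    _ = ε₁ * ‖(ρZ g : Z →L[ℝ] Z)‖ + ε₂ + ε₃ := by ring
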